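/- Let Ω₁, Ω₂ ⊆ ℂ be open, let f : Ω₂ → ℂ be holomorphic with only simple zeros (f′(w) ≠ 0 at every zero w of f), let g : Ω₁ → ℂ, and let z₀ ∈ Ω₁ and w₀ ∈ Ω₂. If there is a continuous function G : Ω₁ → ℂ whose partial derivatives exist at every point of Ω₁ and satisfy ∂G/∂z̄ = g(z) everywhere, then there exist an open neighborhood Ω₁⁰ ⊆ Ω₁ of z₀ and a non-constant continuous function u : Ω₁⁰ → Ω₂ whose partial derivatives exist at every point of Ω₁⁰, such that ∂u/∂z̄ = f(u(z))·g(z) at every point of Ω₁⁰ and u(z₀) = w₀. -/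

import Mathlib

open Complex MeasureTheory Set Metric Topology
open scoped ContDiff

/-- Pointwise partial derivative of `u` in the `x`-direction (junk value if it does not exist). -/
noncomputable def pdx (u : ℂ → ℂ) (z : ℂ) : ℂ := deriv (fun t : ℝ => u (z + ↑t)) 0

/-- Pointwise partial derivative of `u` in the `y`-direction (junk value if it does not exist). -/
noncomputable def pdy (u : ℂ → ℂ) (z : ℂ) : ℂ := deriv (fun t : ℝ => u (z + ↑t * Complex.I)) 0

/-- Both pointwise partial derivatives `u_x`, `u_y` exist at `z`. -/
def PartialsAt (u : ℂ → ℂ) (z : ℂ) : Prop :=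
  (∃ a, HasDerivAt (fun t : ℝ => u (z + ↑t)) a 0) ∧
  (∃ b, HasDerivAt (fun t : ℝ => u (z + ↑t * Complex.I)) b 0)

/-- The pointwise Wirtinger derivative `∂u/∂z̄ = (u_x + i u_y)/2`. -/
noncomputable def dzbar (u : ℂ → ℂ) (z : ℂ) : ℂ := (pdx u z + Complex.I * pdy u z) / 2

/-- The pointwise Wirtinger derivative `∂u/∂z = (u_x - i u_y)/2`. -/
noncomputable def dzz (u : ℂ → ℂ) (z : ℂ) : ℂ := (pdx u z - Complex.I * pdy u z) / 2

/-- Condition (*): the partial derivatives `u_x`, `u_y` exist at every point of `Ω`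
except possibly at countably many points. -/
def CondStar (u : ℂ → ℂ) (Ω : Set ℂ) : Prop :=
  ∃ S : Set ℂ, S.Countable ∧ ∀ z ∈ Ω \ S, PartialsAt u z

/-- The open rectangle `(a₁,b₁) × (a₂,b₂)` in `ℂ = ℝ²`. -/
def Rect (a₁ b₁ a₂ b₂ : ℝ) : Set ℂ := {z : ℂ | z.re ∈ Set.Ioo a₁ b₁ ∧ z.im ∈ Set.Ioo a₂ b₂}

private lemma exists_primitive {f : ℂ → ℂ} {c : ℂ} (hf : AnalyticAt ℂ f c) :
    ∃ s : ℝ, 0 < s ∧ ∃ F : ℂ → ℂ, ∀ w ∈ ball c s, HasDerivAt F (f w) w := by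
  obtain ⟨p, r, hp⟩ := hf
  obtain ⟨s, hs0, hsr⟩ := ENNReal.lt_iff_exists_nnreal_btwn.mp hp.r_pos
  have hs0' : (0:ℝ) < s := by exact_mod_cast hs0
  set a : ℕ → ℂ := fun n => p.coeff n with ha
  set gg : ℕ → ℂ → ℂ := fun n w => (a n / (n+1)) * (w - c)^(n+1) with hgg
  set gg' : ℕ → ℂ → ℂ := fun n w => a n * (w - c)^n with hgg'
  have hu : Summable fun n => ‖p n‖ * (s:ℝ)^n := p.summable_norm_mul_pow (hsr.trans_le hp.r_le)
  have hg : ∀ n y, y ∈ ball c (s:ℝ) → HasDerivAt (gg n) (gg' n y) y := by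
    intro n y _
    have h1 : HasDerivAt (fun w : ℂ => (w - c)^(n+1)) (((n:ℂ)+1) * (y - c)^n) y := by
      simpa using ((hasDerivAt_id y).sub_const c).fun_pow (n+1)
    have h2 : HasDerivAt (gg n) (a n / ((n:ℂ)+1) * (((n:ℂ)+1) * (y - c)^n)) y :=
      h1.const_mul (a n / ((n:ℂ)+1))
    convert h2 using 1
    have : ((n:ℂ)+1) ≠ 0 := Nat.cast_add_one_ne_zero n
    field_simp [hgg']
    ring
  have hcoeff : ∀ n, ‖a n‖ ≤ ‖p n‖ := by
    intro n
    have : p.coeff n = p n (fun _ => 1) := rfl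
    show ‖p.coeff n‖ ≤ ‖p n‖
    rw [this]
    calc ‖p n fun _ => (1:ℂ)‖ ≤ ‖p n‖ * ∏ _i : Fin n, ‖(1:ℂ)‖ := (p n).le_opNorm _
    _ = ‖p n‖ := by simp
  have hg' : ∀ n y, y ∈ ball c (s:ℝ) → ‖gg' n y‖ ≤ ‖p n‖ * (s:ℝ)^n := by
    intro n y hy
    have hyc : ‖y - c‖ ≤ (s:ℝ) := (mem_ball_iff_norm.mp hy).le
    calc ‖a n * (y-c)^n‖ = ‖a n‖ * ‖y - c‖^n := by rw [norm_mul, norm_pow]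
    _ ≤ ‖p n‖ * (s:ℝ)^n :=
        mul_le_mul (hcoeff n) (pow_le_pow_left₀ (norm_nonneg _) hyc n) (by positivity)
          (norm_nonneg _)
  have hg0 : Summable fun n => gg n c := by
    apply summable_zero.congr
    intro n; simp [hgg]
  have key : ∀ y ∈ ball c (s:ℝ), HasDerivAt (fun w => ∑' n, gg n w) (∑' n, gg' n y) y := by
    intro y hy
    exact hasDerivAt_tsum_of_isPreconnected hu isOpen_ball (convex_ball c _).isPreconnected
      hg hg' (mem_ball_self hs0') hg0 hy
  refine ⟨s, hs0', fun w => ∑' n, gg n w, fun y hy => ?_⟩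
  have hmem : y - c ∈ Metric.eball (0:ℂ) r := by
    rw [Metric.mem_eball, edist_eq_enorm_sub, sub_zero, enorm_eq_nnnorm]
    refine lt_trans ?_ hsr
    exact_mod_cast (by rw [← NNReal.coe_lt_coe, coe_nnnorm]; exact mem_ball_iff_norm.mp hy : ‖y - c‖₊ < s)
  have hsum : HasSum (fun n => gg' n y) (f y) := by
    have := hp.hasSum hmem
    simp only [add_sub_cancel] at this
    refine HasSum.congr_fun this fun n => ?_
    rw [p.apply_eq_pow_smul_coeff, smul_eq_mul, hgg']
    ring
  rw [← hsum.tsum_eq]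
  exact key y hy

private lemma exists_local_inverse {K K' : ℂ → ℂ} {w₀ : ℂ} {W : Set ℂ} (hW : IsOpen W)
    (hw₀ : w₀ ∈ W) (hK : ∀ w ∈ W, HasDerivAt K (K' w) w) (hK'0 : ∀ w ∈ W, K' w ≠ 0) :
    ∃ ε : ℝ, 0 < ε ∧ ∃ φ : ℂ → ℂ, φ (K w₀) = w₀ ∧ ContinuousOn φ (ball (K w₀) ε) ∧
      ∀ ζ ∈ ball (K w₀) ε,
        φ ζ ∈ W ∧ K (φ ζ) = ζ ∧ HasDerivAt φ ((K' (φ ζ))⁻¹) ζ := by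
  have hKdiff : DifferentiableOn ℂ K W := fun w hw =>
    ((hK w hw).differentiableAt).differentiableWithinAt
  have han : AnalyticAt ℂ K w₀ := hKdiff.analyticAt (hW.mem_nhds hw₀)
  have hstrict : HasStrictDerivAt K (K' w₀) w₀ :=
    (han.contDiffAt (n := 1)).hasStrictDerivAt' (hK w₀ hw₀) one_ne_zero
  have e := hstrict.hasStrictFDerivAt_equiv (hK'0 w₀ hw₀)
  set Φ := e.toOpenPartialHomeomorph K with hΦ
  have hcoe : (Φ : ℂ → ℂ) = K := e.toOpenPartialHomeomorph_coe
  have hsrc : w₀ ∈ Φ.source := e.mem_toOpenPartialHomeomorph_source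
  have htgt : K w₀ ∈ Φ.target := by
    have := e.image_mem_toOpenPartialHomeomorph_target
    simpa [hΦ] using this
  set φ : ℂ → ℂ := (Φ.symm : ℂ → ℂ) with hφ
  have hφw₀ : φ (K w₀) = w₀ := by
    have := Φ.left_inv hsrc
    rwa [hcoe] at this
  have hcont : ContinuousOn φ Φ.target := Φ.continuousOn_symm
  have hnt : Φ.target ∈ 𝓝 (K w₀) := Φ.open_target.mem_nhds htgt
  have hca : ContinuousAt φ (K w₀) := hcont.continuousAt hnt
  have hWmem : ∀ᶠ ζ in 𝓝 (K w₀), φ ζ ∈ W := by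
    apply hca (hW.mem_nhds ?_)
    rw [hφw₀]; exact hw₀
  have hboth : ∀ᶠ ζ in 𝓝 (K w₀), ζ ∈ Φ.target ∧ φ ζ ∈ W := Filter.Eventually.and hnt hWmem
  obtain ⟨ε, hε, hball⟩ := Metric.mem_nhds_iff.mp hboth
  refine ⟨ε, hε, φ, hφw₀, hcont.mono (fun ζ hζ => (hball hζ).1), fun ζ hζ => ?_⟩
  obtain ⟨hζt, hζW⟩ := hball hζ
  have hrinv : K (φ ζ) = ζ := by
    have := Φ.right_inv hζt
    rwa [hcoe] at this
  refine ⟨hζW, hrinv, ?_⟩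
  have hfg : ∀ᶠ y in 𝓝 ζ, K (φ y) = y := by
    filter_upwards [Φ.open_target.mem_nhds hζt] with y hy
    have := Φ.right_inv hy
    rwa [hcoe] at this
  have hKd : HasDerivAt K (K' (φ ζ)) (φ ζ) := hK _ hζW
  exact HasDerivAt.of_local_left_inverse (hcont.continuousAt (Φ.open_target.mem_nhds hζt))
    hKd (hK'0 _ hζW) hfg

private lemma partials_spec {u : ℂ → ℂ} {z px py : ℂ}
    (hx : HasDerivAt (fun t : ℝ => u (z + ↑t)) px 0)
    (hy : HasDerivAt (fun t : ℝ => u (z + ↑t * Complex.I)) py 0) :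
    PartialsAt u z ∧ dzbar u z = (px + Complex.I * py) / 2 := by
  refine ⟨⟨⟨px, hx⟩, ⟨py, hy⟩⟩, ?_⟩
  rw [dzbar, pdx, pdy, hx.deriv, hy.deriv]

private lemma comp_dir {φ : ℂ → ℂ} {h : ℝ → ℂ} {a b : ℂ} (hφ : HasDerivAt φ a (h 0))
    (hh : HasDerivAt h b 0) : HasDerivAt (fun t => φ (h t)) (a * b) 0 := by
  have := (hφ.hasFDerivAt.restrictScalars ℝ).comp_hasDerivAt 0 hh
  simpa [mul_comm, Function.comp_def] using this

private lemma hre : HasDerivAt (fun t : ℝ => (↑t : ℂ)) 1 0 := by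
  exact Complex.ofRealCLM.hasDerivAt

private lemma him : HasDerivAt (fun t : ℝ => (↑t : ℂ) * Complex.I) Complex.I 0 := by
  simpa using hre.mul_const Complex.I

private lemma G_dirs {G g : ℂ → ℂ} {z : ℂ} (h : PartialsAt G z) (hd : dzbar G z = g z) :
    ∃ px py : ℂ, HasDerivAt (fun t : ℝ => G (z + ↑t)) px 0 ∧
      HasDerivAt (fun t : ℝ => G (z + ↑t * Complex.I)) py 0 ∧ (px + Complex.I * py) / 2 = g z := by
  obtain ⟨⟨px, hpx⟩, ⟨py, hpy⟩⟩ := h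
  refine ⟨px, py, hpx, hpy, ?_⟩
  rw [← hd, dzbar, pdx, pdy, hpx.deriv, hpy.deriv]


/-- Theorem (lem4.6): local existence when f has only simple zeros. -/
theorem stmt13 (Ω₁ Ω₂ : Set ℂ) (hΩ₁ : IsOpen Ω₁) (hΩ₂ : IsOpen Ω₂)
    (f : ℂ → ℂ) (hf : DifferentiableOn ℂ f Ω₂)
    (hsimple : ∀ w ∈ Ω₂, f w = 0 → deriv f w ≠ 0)
    (g : ℂ → ℂ) (z₀ : ℂ) (hz₀ : z₀ ∈ Ω₁) (w₀ : ℂ) (hw₀ : w₀ ∈ Ω₂)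
    (G : ℂ → ℂ) (hG : ContinuousOn G Ω₁)
    (hG' : ∀ z ∈ Ω₁, PartialsAt G z ∧ dzbar G z = g z) :
    ∃ Ω₁' : Set ℂ, Ω₁' ⊆ Ω₁ ∧ IsOpen Ω₁' ∧ z₀ ∈ Ω₁' ∧
      ∃ u : ℂ → ℂ, ContinuousOn u Ω₁' ∧ MapsTo u Ω₁' Ω₂ ∧
        (¬ ∃ c, ∀ z ∈ Ω₁', u z = c) ∧
        (∀ z ∈ Ω₁', PartialsAt u z ∧ dzbar u z = f (u z) * g z) ∧
        u z₀ = w₀ := by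
  obtain ⟨ρ, hρ, hρsub⟩ := Metric.isOpen_iff.mp hΩ₂ w₀ hw₀
  by_cases hconst : ∃ δ : ℝ, 0 < δ ∧ ball z₀ δ ⊆ Ω₁ ∧ ∀ z ∈ ball z₀ δ, G z = G z₀
  · -- G is locally constant near z₀ : take an affine nonconstant holomorphic u
    obtain ⟨δ, hδ, hsub, hGc⟩ := hconst
    set cc : ℂ := ((ρ / (2*δ) : ℝ) : ℂ) with hcc
    have hccpos : (0:ℝ) < ρ / (2*δ) := by positivity
    have hccne : cc ≠ 0 := by
      simp only [hcc, ne_eq, Complex.ofReal_eq_zero]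
      exact ne_of_gt hccpos
    set u : ℂ → ℂ := fun z => w₀ + cc * (z - z₀) with hu
    refine ⟨ball z₀ δ, hsub, isOpen_ball, mem_ball_self hδ, u, ?_, ?_, ?_, ?_, by simp [hu]⟩
    · exact (continuous_const.add (continuous_const.mul
        (continuous_id.sub continuous_const))).continuousOn
    · intro z hz
      apply hρsub
      have h1 : ‖z - z₀‖ < δ := mem_ball_iff_norm.mp hz
      have : ‖u z - w₀‖ < ρ := by
        have : ‖u z - w₀‖ = (ρ / (2*δ)) * ‖z - z₀‖ := by
          simp only [hu, add_sub_cancel_left, norm_mul, hcc, Complex.norm_real,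
            Real.norm_eq_abs, abs_of_pos hccpos]
        rw [this]
        calc (ρ / (2*δ)) * ‖z - z₀‖ < (ρ / (2*δ)) * δ := by
              apply mul_lt_mul_of_pos_left h1 hccpos
        _ = ρ / 2 := by field_simp
        _ < ρ := by linarith
      exact mem_ball_iff_norm.mpr this
    · rintro ⟨c, hc⟩
      have h0 := hc z₀ (mem_ball_self hδ)
      have hmem : z₀ + ((δ/2 : ℝ) : ℂ) ∈ ball z₀ δ := by
        rw [mem_ball_iff_norm]
        simp only [add_sub_cancel_left, Complex.norm_real, Real.norm_eq_abs]
        rw [abs_of_pos (by linarith)]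
        linarith
      have h1 := hc _ hmem
      simp only [hu, add_sub_cancel_left] at h0 h1
      rw [sub_self, mul_zero, add_zero] at h0
      rw [h0] at h1
      have : cc * ((δ/2 : ℝ) : ℂ) = 0 := by linear_combination h1
      exact absurd this (mul_ne_zero hccne (by
        simp only [ne_eq, Complex.ofReal_eq_zero]; linarith))
    · intro z hz
      -- partial derivatives of u
      have hx : HasDerivAt (fun t : ℝ => u (z + ↑t)) cc 0 := by
        have h := ((hre.const_mul cc).const_add (w₀ + cc * (z - z₀)))
        simp only [mul_one] at h
        exact h.congr_of_eventuallyEq (Filter.Eventually.of_forall fun t => by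
          simp only [hu]; ring)
      have hy : HasDerivAt (fun t : ℝ => u (z + ↑t * Complex.I)) (cc * Complex.I) 0 := by
        have h := ((him.const_mul cc).const_add (w₀ + cc * (z - z₀)))
        exact h.congr_of_eventuallyEq (Filter.Eventually.of_forall fun t => by
          simp only [hu]; ring)
      obtain ⟨hP, hdz⟩ := partials_spec hx hy
      refine ⟨hP, ?_⟩
      -- g z = 0 since G is constant on a neighbourhood of z
      obtain ⟨η, hη, hηsub⟩ := Metric.isOpen_iff.mp isOpen_ball z hz
      have hgz : g z = 0 := by
        obtain ⟨hPG, hdzG⟩ := hG' z (hsub hz)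
        rw [← hdzG, dzbar]
        have e1 : pdx G z = 0 := by
          rw [pdx]
          have : (fun t : ℝ => G (z + ↑t)) =ᶠ[𝓝 (0:ℝ)] fun _ => G z₀ := by
            have : ∀ᶠ t : ℝ in 𝓝 0, |t| < η := by
              have := Metric.ball_mem_nhds (0:ℝ) hη
              filter_upwards [this] with t ht
              simpa [Real.dist_eq] using ht
            filter_upwards [this] with t ht
            apply hGc
            apply hηsub
            rw [mem_ball_iff_norm]
            simpa [Complex.norm_real] using ht
          rw [this.deriv_eq, deriv_const]
        have e2 : pdy G z = 0 := by
          rw [pdy]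
          have : (fun t : ℝ => G (z + ↑t * Complex.I)) =ᶠ[𝓝 (0:ℝ)] fun _ => G z₀ := by
            have : ∀ᶠ t : ℝ in 𝓝 0, |t| < η := by
              have := Metric.ball_mem_nhds (0:ℝ) hη
              filter_upwards [this] with t ht
              simpa [Real.dist_eq] using ht
            filter_upwards [this] with t ht
            apply hGc
            apply hηsub
            rw [mem_ball_iff_norm]
            simpa [Complex.norm_real] using ht
          rw [this.deriv_eq, deriv_const]
        rw [e1, e2]
        simp
      rw [hdz, hgz, mul_zero]
      linear_combination (cc / 2) * Complex.I_mul_I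
  · have hfa : AnalyticAt ℂ f w₀ := hf.analyticAt (hΩ₂.mem_nhds hw₀)
    have hev2 : ∀ᶠ z in 𝓝 z₀, z ∈ Ω₁ := hΩ₁.mem_nhds hz₀
    by_cases hf0 : f w₀ = 0
    · -- Case B: simple zero at w₀
      have haa : deriv f w₀ ≠ 0 := hsimple w₀ hw₀ hf0
      set aa := deriv f w₀ with haadef
      obtain ⟨p, hp⟩ := hfa
      have hh_an : AnalyticAt ℂ (dslope f w₀) w₀ := ⟨_, hp.has_fpower_series_dslope_fslope⟩
      set hh : ℂ → ℂ := dslope f w₀ with hhdef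
      have hh0 : hh w₀ = aa := dslope_same f w₀
      have hhne : hh w₀ ≠ 0 := by rw [hh0]; exact haa
      set rr : ℂ → ℂ := fun w => aa * (hh w)⁻¹ with hrdef
      have hr_an : AnalyticAt ℂ rr w₀ := analyticAt_const.mul (hh_an.inv hhne)
      obtain ⟨pr, hpr⟩ := hr_an
      have hq_an : AnalyticAt ℂ (dslope rr w₀) w₀ := ⟨_, hpr.has_fpower_series_dslope_fslope⟩
      set q : ℂ → ℂ := dslope rr w₀ with hqdef
      obtain ⟨s₁, hs₁, m, hm⟩ := exists_primitive hq_an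
      obtain ⟨s₂, hs₂, hhne'⟩ :=
        Metric.eventually_nhds_iff_ball.mp (hh_an.continuousAt.eventually_ne hhne)
      set sV := min s₁ (min s₂ ρ) with hsV
      have hsVpos : 0 < sV := lt_min hs₁ (lt_min hs₂ hρ)
      have hWsub1 : ball w₀ sV ⊆ ball w₀ s₁ := ball_subset_ball (min_le_left _ _)
      have hWsub2 : ball w₀ sV ⊆ ball w₀ s₂ :=
        ball_subset_ball ((min_le_right _ _).trans (min_le_left _ _))
      have hWsubρ : ball w₀ sV ⊆ ball w₀ ρ :=
        ball_subset_ball ((min_le_right _ _).trans (min_le_right _ _))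
      set K : ℂ → ℂ := fun w => (w - w₀) * Complex.exp (m w) with hK
      set K' : ℂ → ℂ := fun w => Complex.exp (m w) * (1 + (w - w₀) * q w) with hK'
      have hfw : ∀ w, f w = (w - w₀) * hh w := by
        intro w
        have h2 := sub_smul_dslope f w₀ w
        rw [hf0, sub_zero] at h2
        rw [← h2, smul_eq_mul, hhdef]
      have hrw : ∀ w, (w - w₀) * q w = rr w - 1 := by
        intro w
        have h2 := sub_smul_dslope rr w₀ w
        rw [smul_eq_mul] at h2
        have h3 : rr w₀ = 1 := by
          show aa * (hh w₀)⁻¹ = 1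
          rw [hh0]
          exact mul_inv_cancel₀ haa
        rw [← h3]
        exact h2
      have hone : ∀ w, 1 + (w - w₀) * q w = aa * (hh w)⁻¹ := by
        intro w
        have h4 : (1 : ℂ) + (rr w - 1) = rr w := by ring
        rw [hrw w, h4]
      have hKd : ∀ w ∈ ball w₀ sV, HasDerivAt K (K' w) w := by
        intro w hw
        have h1 : HasDerivAt K (1 * Complex.exp (m w) + (id w - w₀) * (Complex.exp (m w) * q w)) w :=
          ((hasDerivAt_id w).sub_const w₀).fun_mul ((hm w (hWsub1 hw)).cexp)
        convert h1 using 1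
        show Complex.exp (m w) * (1 + (w - w₀) * q w) = _
        simp only [id_eq]
        ring
      have hK'ne : ∀ w ∈ ball w₀ sV, K' w ≠ 0 := by
        intro w hw
        show Complex.exp (m w) * (1 + (w - w₀) * q w) ≠ 0
        apply mul_ne_zero (Complex.exp_ne_zero _)
        rw [hone w]
        exact mul_ne_zero haa (inv_ne_zero (hhne' w (hWsub2 hw)))
      have hKf : ∀ w ∈ ball w₀ sV, K' w * f w = aa * K w := by
        intro w hw
        have hne := hhne' w (hWsub2 hw)
        show Complex.exp (m w) * (1 + (w - w₀) * q w) * f w = aa * ((w - w₀) * Complex.exp (m w))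
        rw [hone w, hfw w]
        field_simp
      obtain ⟨ε, hε, φ, hφ0, hφcont, hφ⟩ :=
        exists_local_inverse isOpen_ball (mem_ball_self hsVpos) hKd hK'ne
      have hKw₀ : K w₀ = 0 := by simp [hK]
      set ξ : ℂ → ℂ := fun z => (z - z₀) * Complex.exp (aa * (G z - G z₀)) with hξ
      have hξ0 : ξ z₀ = 0 := by simp [hξ]
      have hGz₀ : ContinuousAt G z₀ := hG.continuousAt (hΩ₁.mem_nhds hz₀)
      have hξc : ContinuousAt ξ z₀ :=
        (continuousAt_id.sub continuousAt_const).mul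
          (Complex.continuous_exp.continuousAt.comp
            (continuousAt_const.mul (hGz₀.sub continuousAt_const)))
      have hev1 : ∀ᶠ z in 𝓝 z₀, ξ z ∈ ball (K w₀) ε := by
        apply hξc
        rw [hξ0, hKw₀]
        exact ball_mem_nhds _ hε
      obtain ⟨δ, hδ, hδball⟩ := Metric.mem_nhds_iff.mp (hev1.and hev2)
      set u : ℂ → ℂ := fun z => φ (ξ z) with hu
      have hsubΩ : ball z₀ δ ⊆ Ω₁ := fun z hz => (hδball hz).2
      have hmemξ : ∀ z ∈ ball z₀ δ, ξ z ∈ ball (K w₀) ε := fun z hz => (hδball hz).1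
      have hu0 : u z₀ = w₀ := by
        show φ (ξ z₀) = w₀
        rw [hξ0, ← hKw₀]
        exact hφ0
      refine ⟨ball z₀ δ, hsubΩ, isOpen_ball, mem_ball_self hδ, u, ?_, ?_, ?_, ?_, hu0⟩
      · have hξon : ContinuousOn ξ (ball z₀ δ) :=
          (continuousOn_id.sub continuousOn_const).mul
            (Complex.continuous_exp.comp_continuousOn
              (continuousOn_const.mul ((hG.mono hsubΩ).sub continuousOn_const)))
        exact hφcont.comp hξon hmemξ
      · intro z hz
        exact hρsub (hWsubρ (hφ _ (hmemξ z hz)).1)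
      · rintro ⟨c, hc⟩
        have hmem1 : z₀ + ((δ/2 : ℝ) : ℂ) ∈ ball z₀ δ := by
          rw [mem_ball_iff_norm]
          simp only [add_sub_cancel_left, Complex.norm_real, Real.norm_eq_abs]
          rw [abs_of_pos (by linarith)]
          linarith
        have h0 := hc z₀ (mem_ball_self hδ)
        have h1 := hc _ hmem1
        have hcw : φ (ξ (z₀ + ((δ/2 : ℝ) : ℂ))) = w₀ := by
          show u (z₀ + ((δ/2 : ℝ) : ℂ)) = w₀
          rw [h1, ← h0, hu0]
        have e1 : K (φ (ξ (z₀ + ((δ/2 : ℝ) : ℂ)))) = ξ (z₀ + ((δ/2 : ℝ) : ℂ)) :=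
          (hφ _ (hmemξ _ hmem1)).2.1
        rw [hcw, hKw₀] at e1
        have e2 : ξ (z₀ + ((δ/2 : ℝ) : ℂ)) =
            ((δ/2 : ℝ) : ℂ) * Complex.exp (aa * (G (z₀ + ((δ/2 : ℝ) : ℂ)) - G z₀)) := by
          show (z₀ + ((δ/2 : ℝ) : ℂ) - z₀) * _ = _
          rw [add_sub_cancel_left]
        rw [e2] at e1
        exact absurd e1.symm (mul_ne_zero
          (by simp only [ne_eq, Complex.ofReal_eq_zero]; linarith)
          (Complex.exp_ne_zero _))
      · intro z hz
        obtain ⟨hPG, hdzG⟩ := hG' z (hsubΩ hz)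
        obtain ⟨px, py, hpx, hpy, hgz⟩ := G_dirs hPG hdzG
        obtain ⟨hφW, hφK, hφd⟩ := hφ _ (hmemξ z hz)
        set E := Complex.exp (aa * (G z - G z₀)) with hE
        set b : ℂ := (K' (φ (ξ z)))⁻¹ with hb
        have hξz : ξ z = (z - z₀) * E := rfl
        have hAx : HasDerivAt (fun t : ℝ => (z + ↑t - z₀)) 1 0 := by
          simpa using (hre.const_add z).sub_const z₀
        have hAy : HasDerivAt (fun t : ℝ => (z + ↑t * Complex.I - z₀)) Complex.I 0 := by
          simpa using (him.const_add z).sub_const z₀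
        have hBx : HasDerivAt (fun t : ℝ => Complex.exp (aa * (G (z + ↑t) - G z₀)))
            (E * (aa * px)) 0 := by
          have := ((hpx.sub_const (G z₀)).const_mul aa).cexp
          simpa [hE] using this
        have hBy : HasDerivAt (fun t : ℝ => Complex.exp (aa * (G (z + ↑t * Complex.I) - G z₀)))
            (E * (aa * py)) 0 := by
          have := ((hpy.sub_const (G z₀)).const_mul aa).cexp
          simpa [hE] using this
        have hxi : HasDerivAt (fun t : ℝ => ξ (z + ↑t))
            (E + (z - z₀) * (E * (aa * px))) 0 := by
          have := (hAx.fun_mul hBx : HasDerivAt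
            (fun t : ℝ => (z + ↑t - z₀) * Complex.exp (aa * (G (z + ↑t) - G z₀))) _ 0)
          simpa [hE] using this
        have hyi : HasDerivAt (fun t : ℝ => ξ (z + ↑t * Complex.I))
            (Complex.I * E + (z - z₀) * (E * (aa * py))) 0 := by
          have := (hAy.fun_mul hBy : HasDerivAt (fun t : ℝ =>
            (z + ↑t * Complex.I - z₀) * Complex.exp (aa * (G (z + ↑t * Complex.I) - G z₀))) _ 0)
          simpa [hE] using this
        have hφdx : HasDerivAt φ b ((fun t : ℝ => ξ (z + ↑t)) 0) := by
          simpa using hφd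
        have hφdy : HasDerivAt φ b ((fun t : ℝ => ξ (z + ↑t * Complex.I)) 0) := by
          simpa using hφd
        have hx := comp_dir hφdx hxi
        have hy := comp_dir hφdy hyi
        have hx' : HasDerivAt (fun t : ℝ => u (z + ↑t))
            (b * (E + (z - z₀) * (E * (aa * px)))) 0 := hx
        have hy' : HasDerivAt (fun t : ℝ => u (z + ↑t * Complex.I))
            (b * (Complex.I * E + (z - z₀) * (E * (aa * py)))) 0 := hy
        obtain ⟨hP, hdzu⟩ := partials_spec hx' hy'
        refine ⟨hP, ?_⟩
        have h5 := hKf _ hφW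
        rw [hφK] at h5
        have hfu : f (φ (ξ z)) = b * (aa * ξ z) := by
          rw [hb, ← h5, inv_mul_cancel_left₀ (hK'ne _ hφW)]
        rw [hdzu, ← hgz]
        have hfu' : f (u z) = b * (aa * ((z - z₀) * E)) := by rw [← hξz]; exact hfu
        rw [hfu']
        linear_combination (b * E / 2) * Complex.I_mul_I
    · -- Case A : f w₀ ≠ 0
      obtain ⟨s₁, hs₁, F, hF⟩ := exists_primitive (hfa.inv hf0)
      have hfc : ContinuousAt f w₀ := hf.continuousOn.continuousAt (hΩ₂.mem_nhds hw₀)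
      obtain ⟨s₂, hs₂, hfne⟩ := Metric.eventually_nhds_iff_ball.mp (hfc.eventually_ne hf0)
      set sV := min s₁ (min s₂ ρ) with hsV
      have hsVpos : 0 < sV := lt_min hs₁ (lt_min hs₂ hρ)
      have hWsub1 : ball w₀ sV ⊆ ball w₀ s₁ := ball_subset_ball (min_le_left _ _)
      have hWsub2 : ball w₀ sV ⊆ ball w₀ s₂ :=
        ball_subset_ball ((min_le_right _ _).trans (min_le_left _ _))
      have hWsubρ : ball w₀ sV ⊆ ball w₀ ρ :=
        ball_subset_ball ((min_le_right _ _).trans (min_le_right _ _))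
      have hKd : ∀ w ∈ ball w₀ sV, HasDerivAt F ((f w)⁻¹) w := fun w hw => hF w (hWsub1 hw)
      have hK'0 : ∀ w ∈ ball w₀ sV, (f w)⁻¹ ≠ 0 := fun w hw => inv_ne_zero (hfne w (hWsub2 hw))
      obtain ⟨ε, hε, φ, hφ0, hφcont, hφ⟩ :=
        exists_local_inverse isOpen_ball (mem_ball_self hsVpos) hKd hK'0
      set H : ℂ → ℂ := fun z => F w₀ + (G z - G z₀) with hH
      have hGz₀ : ContinuousAt G z₀ := hG.continuousAt (hΩ₁.mem_nhds hz₀)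
      have hHc : ContinuousAt H z₀ := continuousAt_const.add (hGz₀.sub continuousAt_const)
      have hH0 : H z₀ = F w₀ := by simp [hH]
      have hev1 : ∀ᶠ z in 𝓝 z₀, H z ∈ ball (F w₀) ε := by
        apply hHc
        rw [hH0]
        exact ball_mem_nhds _ hε
      obtain ⟨δ, hδ, hδball⟩ := Metric.mem_nhds_iff.mp (hev1.and hev2)
      set u : ℂ → ℂ := fun z => φ (H z) with hu
      have hsubΩ : ball z₀ δ ⊆ Ω₁ := fun z hz => (hδball hz).2
      have hmemH : ∀ z ∈ ball z₀ δ, H z ∈ ball (F w₀) ε := fun z hz => (hδball hz).1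
      refine ⟨ball z₀ δ, hsubΩ, isOpen_ball, mem_ball_self hδ, u, ?_, ?_, ?_, ?_, ?_⟩
      · have hHon : ContinuousOn H (ball z₀ δ) :=
          continuousOn_const.add ((hG.mono hsubΩ).sub continuousOn_const)
        exact hφcont.comp hHon hmemH
      · intro z hz
        exact hρsub (hWsubρ (hφ _ (hmemH z hz)).1)
      · rintro ⟨c, hc⟩
        apply hconst
        refine ⟨δ, hδ, hsubΩ, fun z hz => ?_⟩
        have e1 : F (φ (H z)) = H z := (hφ _ (hmemH z hz)).2.1
        have e0 : F (φ (H z₀)) = H z₀ := (hφ _ (hmemH z₀ (mem_ball_self hδ))).2.1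
        have huz : u z = u z₀ := by rw [hc z hz, hc z₀ (mem_ball_self hδ)]
        have hHz : H z = H z₀ := by
          rw [← e1, ← e0]
          exact congrArg F huz
        simp only [hH] at hHz
        have h3 : G z - G z₀ = G z₀ - G z₀ := add_left_cancel hHz
        rw [sub_self] at h3
        exact sub_eq_zero.mp h3
      · intro z hz
        obtain ⟨hPG, hdzG⟩ := hG' z (hsubΩ hz)
        obtain ⟨px, py, hpx, hpy, hgz⟩ := G_dirs hPG hdzG
        obtain ⟨hφW, hφK, hφd⟩ := hφ _ (hmemH z hz)
        set b : ℂ := ((f (φ (H z)))⁻¹)⁻¹ with hb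
        have hbf : b = f (u z) := by rw [hb, inv_inv]
        have hHx : HasDerivAt (fun t : ℝ => H (z + ↑t)) px 0 :=
          (hpx.sub_const (G z₀)).const_add (F w₀)
        have hHy : HasDerivAt (fun t : ℝ => H (z + ↑t * Complex.I)) py 0 :=
          (hpy.sub_const (G z₀)).const_add (F w₀)
        have hφdx : HasDerivAt φ b ((fun t : ℝ => H (z + ↑t)) 0) := by
          simpa using hφd
        have hφdy : HasDerivAt φ b ((fun t : ℝ => H (z + ↑t * Complex.I)) 0) := by
          simpa using hφd
        have hx := comp_dir hφdx hHx
        have hy := comp_dir hφdy hHy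
        have hx' : HasDerivAt (fun t : ℝ => u (z + ↑t)) (b * px) 0 := hx
        have hy' : HasDerivAt (fun t : ℝ => u (z + ↑t * Complex.I)) (b * py) 0 := hy
        obtain ⟨hP, hdzu⟩ := partials_spec hx' hy'
        refine ⟨hP, ?_⟩
        rw [hdzu, ← hgz, ← hbf]
        ring
      · show φ (H z₀) = w₀
        rw [hH0]
        exact hφ0
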